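/- Let η ∈ H²(S¹;ℝ^d) be a constant-speed closed curve (|∂_s η| ≡ L) and let σ : S¹ → ℝ be H² with L² ∂_{ss}σ − |∂_{ss}η|² σ = −|∂_{ss}η|² + c where c = ∫₀¹ (1−σ)|∂_{ss}η|² ds and ∫₀¹ σ ds = 0. Set σ̃ := 1 − σ. Then ∫₀¹ σ̃ |∂_{ss}η|² ds ≥ 0, with equality if and only if σ̃ ≡ 0 on S¹; since ∫₀¹ σ̃ ds = 1, in fact the strict inequality ∫₀¹ σ̃ |∂_{ss}η|² ds > 0 holds. -/

import Mathlib

open Real MeasureTheory intervalIntegral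

open scoped ENNReal

-- positivity of integral of continuous nonneg fn positive somewhere inside
lemma aux_pos_integral (f : ℝ → ℝ) (hf : Continuous f) (h0 : ∀ x, 0 ≤ f x)
    (x₀ : ℝ) (hx : x₀ ∈ Set.Ioo (0:ℝ) 1) (hpos : 0 < f x₀) :
    0 < ∫ s in (0:ℝ)..1, f s := by
  rw [intervalIntegral.integral_pos_iff_support_of_nonneg_ae'
    (Filter.Eventually.of_forall fun x => h0 x) (hf.intervalIntegrable 0 1)]
  refine ⟨one_pos, ?_⟩
  have hopen : IsOpen ({x | 0 < f x} ∩ Set.Ioo 0 1) :=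
    (isOpen_lt continuous_const hf).inter isOpen_Ioo
  have hsub : ({x | 0 < f x} ∩ Set.Ioo 0 1) ⊆ Function.support f ∩ Set.Ioc 0 1 := by
    rintro x ⟨h1, h2⟩
    exact ⟨ne_of_gt h1, Set.Ioo_subset_Ioc_self h2⟩
  have hne : ({x | 0 < f x} ∩ Set.Ioo 0 1).Nonempty := ⟨x₀, hpos, hx⟩
  calc (0:ℝ≥0∞) < volume ({x | 0 < f x} ∩ Set.Ioo 0 1) := hopen.measure_pos volume hne
    _ ≤ _ := measure_mono hsub

lemma aux_zero_of_integral_zero (f : ℝ → ℝ) (hf : Continuous f) (h0 : ∀ x, 0 ≤ f x)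
    (hper : Function.Periodic f 1) (hint : (∫ s in (0:ℝ)..1, f s) = 0) :
    ∀ x, f x = 0 := by
  have hIoo : ∀ x ∈ Set.Ioo (0:ℝ) 1, f x = 0 := by
    intro x hx
    by_contra h
    have : 0 < f x := lt_of_le_of_ne (h0 x) (Ne.symm h)
    exact absurd hint (ne_of_gt (aux_pos_integral f hf h0 x hx this))
  have hIcc : Set.EqOn f 0 (Set.Icc (0:ℝ) 1) := by
    have := (Set.EqOn.closure (fun x hx => hIoo x hx) hf continuous_const)
    rwa [closure_Ioo one_ne_zero.symm] at this
  intro x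
  have hfrac : Int.fract x ∈ Set.Icc (0:ℝ) 1 :=
    ⟨Int.fract_nonneg x, le_of_lt (Int.fract_lt_one x)⟩
  have : f (Int.fract x) = f x := by
    rw [Int.fract]
    simpa only [mul_one] using hper.sub_int_mul_eq (n := ⌊x⌋)
  rw [← this]; exact hIcc hfrac

noncomputable section

/-- Sign of the Lagrange multiplier `σ̃ = 1 - σ`: along a constant-speed closed curve,
`∫ σ̃ |∂_ss η|² ds ≥ 0`, with equality iff `σ̃ ≡ 0`; since `∫ σ̃ = 1` the inequality is
in fact strict. -/
theorem stmt2 (d : ℕ)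
    (η : ℝ → EuclideanSpace ℝ (Fin d)) (σ : ℝ → ℝ) (L c : ℝ)
    (hη : ContDiff ℝ 2 η) (hσ : ContDiff ℝ 2 σ)
    (hperη : Function.Periodic η 1) (hperσ : Function.Periodic σ 1)
    (hLpos : 0 < L) (hspeed : ∀ s, ‖deriv η s‖ = L)
    (hode : ∀ s, L ^ 2 * deriv (deriv σ) s - ‖deriv (deriv η) s‖ ^ 2 * σ s
        = -‖deriv (deriv η) s‖ ^ 2 + c)
    (hc : c = ∫ s in (0:ℝ)..1, (1 - σ s) * ‖deriv (deriv η) s‖ ^ 2)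
    (hσmean : (∫ s in (0:ℝ)..1, σ s) = 0) :
    (0 ≤ ∫ s in (0:ℝ)..1, (1 - σ s) * ‖deriv (deriv η) s‖ ^ 2) ∧
    ((∫ s in (0:ℝ)..1, (1 - σ s) * ‖deriv (deriv η) s‖ ^ 2) = 0 ↔ ∀ s, 1 - σ s = 0) ∧
    (0 < ∫ s in (0:ℝ)..1, (1 - σ s) * ‖deriv (deriv η) s‖ ^ 2) := by
  -- smoothness bookkeeping
  have hσd : Differentiable ℝ σ := hσ.differentiable (by norm_num)
  have hσ1 : ContDiff ℝ 1 (deriv σ) := by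
    have := contDiff_succ_iff_deriv.mp (show ContDiff ℝ (1+1) σ by norm_num; exact hσ)
    exact this.2.2
  have hσ'd : Differentiable ℝ (deriv σ) := hσ1.differentiable one_ne_zero
  have hσ''c : Continuous (deriv (deriv σ)) := by
    have := contDiff_succ_iff_deriv.mp (show ContDiff ℝ (0+1) (deriv σ) by norm_num; exact hσ1)
    exact this.2.2.continuous
  have hσc : Continuous σ := hσ.continuous
  have hσ'c : Continuous (deriv σ) := hσ1.continuous
  have hηd : Differentiable ℝ η := hη.differentiable (by norm_num)
  have hη1 : ContDiff ℝ 1 (deriv η) := by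
    have := contDiff_succ_iff_deriv.mp (show ContDiff ℝ (1+1) η by norm_num; exact hη)
    exact this.2.2
  have hη'd : Differentiable ℝ (deriv η) := hη1.differentiable one_ne_zero
  have hη''c : Continuous (deriv (deriv η)) := by
    have := contDiff_succ_iff_deriv.mp (show ContDiff ℝ (0+1) (deriv η) by norm_num; exact hη1)
    exact this.2.2.continuous
  have hkc : Continuous (fun s => ‖deriv (deriv η) s‖ ^ 2) := (hη''c.norm).pow 2
  -- periodicity of derivatives
  have hperσ' : Function.Periodic (deriv σ) 1 := by
    intro x
    have hfun : (fun t => σ (t + 1)) = σ := funext hperσ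
    rw [show deriv σ (x + 1) = deriv (fun t => σ (t + 1)) x from
      (deriv_comp_add_const σ 1 x).symm, hfun]
  have hperη' : Function.Periodic (deriv η) 1 := by
    intro x
    have hfun : (fun t => η (t + 1)) = η := funext hperη
    rw [show deriv η (x + 1) = deriv (fun t => η (t + 1)) x from
      (deriv_comp_add_const η 1 x).symm, hfun]
  have hperk : Function.Periodic (fun s => ‖deriv (deriv η) s‖ ^ 2) 1 := by
    intro x
    have hfun : (fun t => deriv η (t + 1)) = deriv η := funext hperη'
    simp only
    rw [show deriv (deriv η) (x + 1) = deriv (fun t => deriv η (t + 1)) x from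
      (deriv_comp_add_const (deriv η) 1 x).symm, hfun]
  -- integration by parts: ∫ σ'' (1-σ) = ∫ (σ')²
  have hibp : (∫ s in (0:ℝ)..1, deriv (deriv σ) s * (1 - σ s))
      = ∫ s in (0:ℝ)..1, (deriv σ s) ^ 2 := by
    have hF : ∀ s ∈ Set.uIcc (0:ℝ) 1,
        HasDerivAt (fun t => deriv σ t * (1 - σ t))
          (deriv (deriv σ) s * (1 - σ s) - (deriv σ s) ^ 2) s := by
      intro s _
      have h1 : HasDerivAt (deriv σ) (deriv (deriv σ) s) s := (hσ'd s).hasDerivAt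
      have h2 : HasDerivAt (fun t => 1 - σ t) (-(deriv σ s)) s := by
        simpa using (hσd s).hasDerivAt.const_sub (1:ℝ)
      have := h1.fun_mul h2
      exact this.congr_deriv (by ring)
    have hcont : Continuous (fun s => deriv (deriv σ) s * (1 - σ s) - (deriv σ s) ^ 2) :=
      (hσ''c.mul (continuous_const.sub hσc)).sub (hσ'c.pow 2)
    have := intervalIntegral.integral_eq_sub_of_hasDerivAt hF (hcont.intervalIntegrable 0 1)
    have hF10 : deriv σ 1 * (1 - σ 1) = deriv σ 0 * (1 - σ 0) := by
      have h1 : σ 1 = σ 0 := by simpa using hperσ 0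
      have h2 : deriv σ 1 = deriv σ 0 := by simpa using hperσ' 0
      rw [h1, h2]
    rw [hF10, sub_self] at this
    have hint1 : IntervalIntegrable (fun s => deriv (deriv σ) s * (1 - σ s)) volume 0 1 :=
      (hσ''c.mul (continuous_const.sub hσc)).intervalIntegrable 0 1
    have hint2 : IntervalIntegrable (fun s => (deriv σ s) ^ 2) volume 0 1 :=
      (hσ'c.pow 2).intervalIntegrable 0 1
    rw [intervalIntegral.integral_sub hint1 hint2] at this
    linarith
  -- the key energy identity
  have henergy : c = L ^ 2 * (∫ s in (0:ℝ)..1, (deriv σ s) ^ 2)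
      + ∫ s in (0:ℝ)..1, ‖deriv (deriv η) s‖ ^ 2 * (1 - σ s) ^ 2 := by
    have hpt : ∀ s, L ^ 2 * (deriv (deriv σ) s * (1 - σ s))
        = c * (1 - σ s) - ‖deriv (deriv η) s‖ ^ 2 * (1 - σ s) ^ 2 := by
      intro s
      linear_combination (1 - σ s) * (hode s)
    have hint1 : IntervalIntegrable (fun s => ‖deriv (deriv η) s‖ ^ 2 * (1 - σ s) ^ 2) volume 0 1 :=
      (hkc.mul ((continuous_const.sub hσc).pow 2)).intervalIntegrable 0 1
    have hint2 : IntervalIntegrable (fun s => c * (1 - σ s)) volume 0 1 :=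
      (continuous_const.mul (continuous_const.sub hσc)).intervalIntegrable 0 1
    have heq : (∫ s in (0:ℝ)..1, L ^ 2 * (deriv (deriv σ) s * (1 - σ s)))
        = ∫ s in (0:ℝ)..1, (c * (1 - σ s) - ‖deriv (deriv η) s‖ ^ 2 * (1 - σ s) ^ 2) := by
      apply intervalIntegral.integral_congr
      intro s _
      exact hpt s
    rw [intervalIntegral.integral_const_mul, hibp] at heq
    rw [intervalIntegral.integral_sub hint2 hint1,
      intervalIntegral.integral_const_mul] at heq
    have hmean : (∫ s in (0:ℝ)..1, (1 - σ s)) = 1 := by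
      rw [intervalIntegral.integral_sub (intervalIntegrable_const) (hσc.intervalIntegrable 0 1),
        hσmean]
      simp
    rw [hmean, mul_one] at heq
    linarith
  -- nonnegativity of both terms
  have hterm1 : 0 ≤ ∫ s in (0:ℝ)..1, (deriv σ s) ^ 2 :=
    intervalIntegral.integral_nonneg (by norm_num) (fun s _ => sq_nonneg _)
  have hterm2 : 0 ≤ ∫ s in (0:ℝ)..1, ‖deriv (deriv η) s‖ ^ 2 * (1 - σ s) ^ 2 :=
    intervalIntegral.integral_nonneg (by norm_num)
      (fun s _ => mul_nonneg (sq_nonneg _) (sq_nonneg _))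
  have hcnonneg : 0 ≤ c := by nlinarith [sq_nonneg L]
  -- strict positivity
  have hcpos : 0 < c := by
    rcases lt_or_eq_of_le hcnonneg with h | h
    · exact h
    -- c = 0: derive contradiction
    exfalso
    have hL2 : (0:ℝ) < L ^ 2 := by positivity
    have hz1 : (∫ s in (0:ℝ)..1, (deriv σ s) ^ 2) = 0 := by nlinarith
    have hz2 : (∫ s in (0:ℝ)..1, ‖deriv (deriv η) s‖ ^ 2 * (1 - σ s) ^ 2) = 0 := by nlinarith
    -- σ' ≡ 0
    have hσ'per : Function.Periodic (fun s => (deriv σ s) ^ 2) 1 := fun x => by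
      simp only; rw [hperσ' x]
    have hσ'zero : ∀ x, deriv σ x = 0 := by
      intro x
      have h2 := aux_zero_of_integral_zero (fun s => (deriv σ s) ^ 2) (hσ'c.pow 2)
        (fun x => sq_nonneg _) hσ'per hz1 x
      exact pow_eq_zero_iff two_ne_zero |>.mp h2
    -- σ constant = 0
    have hσconst : ∀ x, σ x = σ 0 := fun x => is_const_of_deriv_eq_zero hσd hσ'zero x 0
    have hσ0 : σ 0 = 0 := by
      have : (∫ s in (0:ℝ)..1, σ s) = σ 0 := by
        rw [intervalIntegral.integral_congr (g := fun _ => σ 0) (fun s _ => hσconst s)]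
        simp
      rw [← this, hσmean]
    have hσzero : ∀ x, σ x = 0 := fun x => (hσconst x).trans hσ0
    -- then k ≡ 0
    have hz2' : (∫ s in (0:ℝ)..1, ‖deriv (deriv η) s‖ ^ 2) = 0 := by
      have heq2 : (∫ s in (0:ℝ)..1, ‖deriv (deriv η) s‖ ^ 2)
          = ∫ s in (0:ℝ)..1, ‖deriv (deriv η) s‖ ^ 2 * (1 - σ s) ^ 2 :=
        intervalIntegral.integral_congr (fun s _ => by rw [hσzero s]; ring)
      rw [heq2, hz2]
    have hkzero : ∀ x, ‖deriv (deriv η) x‖ ^ 2 = 0 :=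
      aux_zero_of_integral_zero _ hkc (fun x => sq_nonneg _) hperk hz2'
    have hη''zero : ∀ x, deriv (deriv η) x = 0 := by
      intro x
      have := hkzero x
      simpa [pow_eq_zero_iff] using this
    -- deriv η constant, but integral of deriv η over a period is 0
    have hη'const : ∀ x, deriv η x = deriv η 0 :=
      fun x => is_const_of_deriv_eq_zero hη'd hη''zero x 0
    have hηint : (∫ s in (0:ℝ)..1, deriv η s) = η 1 - η 0 :=
      intervalIntegral.integral_deriv_eq_sub (fun x _ => hηd x)
        ((hη1.continuous).intervalIntegrable 0 1)
    have hηper : η 1 = η 0 := by simpa using hperη 0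
    have : (∫ s in (0:ℝ)..1, deriv η s) = deriv η 0 := by
      rw [intervalIntegral.integral_congr (g := fun _ => deriv η 0) (fun s _ => hη'const s)]
      simp
    have hv0 : deriv η 0 = 0 := by
      rw [← this, hηint, hηper, sub_self]
    have := hspeed 0
    rw [hv0] at this
    simp at this
    linarith
  constructor
  · rw [← hc]; exact hcnonneg
  constructor
  · constructor
    · intro h
      rw [← hc] at h
      exact absurd h (ne_of_gt hcpos)
    · intro h
      exfalso
      have : ∀ s, σ s = 1 := fun s => by have := h s; linarith
      have : (∫ s in (0:ℝ)..1, σ s) = 1 := by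
        rw [intervalIntegral.integral_congr (g := fun _ => (1:ℝ)) (fun s _ => this s)]
        simp
      rw [hσmean] at this
      exact zero_ne_one this
  · rw [← hc]; exact hcpos
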